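/- Let (M,g) be a Riemannian manifold, H a 3-form, and ∇̂ the metric connection with torsion H. Then the curvature R̂ of ∇̂ satisfies 3 R̂_{[ijk]m} = -(3/2) ∇̂_{[i} H_{jk]m} - (1/2) ∇̂_m H_{ijk} - (1/2)(dH)_{ijkm}. -/

import Mathlib

open scoped BigOperators

noncomputable section

variable {n : ℕ}

/-- Coordinate partial derivative of a function on `ℝⁿ` in the `i`-th coordinate direction. -/
def pd (i : Fin n) (f : EuclideanSpace ℝ (Fin n) → ℝ) (x : EuclideanSpace ℝ (Fin n)) : ℝ :=
  fderiv ℝ f x (EuclideanSpace.single i 1)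

/-- Lowered Christoffel symbols `Γ_{kij}` of the Levi-Civita connection of the metric `g`. -/
def christoffelLow (g : EuclideanSpace ℝ (Fin n) → Fin n → Fin n → ℝ) (k i j : Fin n)
    (x : EuclideanSpace ℝ (Fin n)) : ℝ :=
  (1 / 2) * (pd i (fun y => g y j k) x + pd j (fun y => g y i k) x - pd k (fun y => g y i j) x)

/-- Christoffel symbols `Γ^k_{ij}` of the Levi-Civita connection `∇` of `g`. -/
def christoffel (g ginv : EuclideanSpace ℝ (Fin n) → Fin n → Fin n → ℝ) (k i j : Fin n)
    (x : EuclideanSpace ℝ (Fin n)) : ℝ :=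
  ∑ l, ginv x k l * christoffelLow g l i j x

/-- Connection coefficients `Γ̂^k_{ij} = Γ^k_{ij} + ½ H^k_{ij}` of the metric connection `∇̂`
with torsion the totally skew 3-form `H` (indices raised with `g`). -/
def christoffelHat (g ginv : EuclideanSpace ℝ (Fin n) → Fin n → Fin n → ℝ)
    (H : EuclideanSpace ℝ (Fin n) → Fin n → Fin n → Fin n → ℝ) (k i j : Fin n)
    (x : EuclideanSpace ℝ (Fin n)) : ℝ :=
  christoffel g ginv k i j x + (1 / 2) * ∑ l, ginv x k l * H x l i j

/-- Curvature `R̂_{ij}{}^k{}_m` of `∇̂`, with the convention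
`(∇̂_i∇̂_j - ∇̂_j∇̂_i) X^k = R̂_{ij}{}^k{}_m X^m` (modulo the torsion term). -/
def curvHatUp (g ginv : EuclideanSpace ℝ (Fin n) → Fin n → Fin n → ℝ)
    (H : EuclideanSpace ℝ (Fin n) → Fin n → Fin n → Fin n → ℝ) (i j k m : Fin n)
    (x : EuclideanSpace ℝ (Fin n)) : ℝ :=
  pd i (christoffelHat g ginv H k j m) x - pd j (christoffelHat g ginv H k i m) x
    + ∑ p, (christoffelHat g ginv H k i p x * christoffelHat g ginv H p j m x
        - christoffelHat g ginv H k j p x * christoffelHat g ginv H p i m x)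

/-- Fully lowered curvature tensor `R̂_{ijkm} = g_{kp} R̂_{ij}{}^p{}_m` of `∇̂`. -/
def curvHat (g ginv : EuclideanSpace ℝ (Fin n) → Fin n → Fin n → ℝ)
    (H : EuclideanSpace ℝ (Fin n) → Fin n → Fin n → Fin n → ℝ) (i j k m : Fin n)
    (x : EuclideanSpace ℝ (Fin n)) : ℝ :=
  ∑ p, g x k p * curvHatUp g ginv H i j p m x

/-- Covariant derivative `∇̂_i H_{jkm}` of the 3-form `H` with respect to `∇̂`. -/
def nablaHatH (g ginv : EuclideanSpace ℝ (Fin n) → Fin n → Fin n → ℝ)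
    (H : EuclideanSpace ℝ (Fin n) → Fin n → Fin n → Fin n → ℝ) (i j k m : Fin n)
    (x : EuclideanSpace ℝ (Fin n)) : ℝ :=
  pd i (fun y => H y j k m) x
    - ∑ p, (christoffelHat g ginv H p i j x * H x p k m
        + christoffelHat g ginv H p i k x * H x j p m
        + christoffelHat g ginv H p i m x * H x j k p)

/-- Covariant derivative `∇_i H_{jkm}` of the 3-form `H` with respect to the
Levi-Civita connection `∇` of `g`. -/
def nablaLCH (g ginv : EuclideanSpace ℝ (Fin n) → Fin n → Fin n → ℝ)
    (H : EuclideanSpace ℝ (Fin n) → Fin n → Fin n → Fin n → ℝ) (i j k m : Fin n)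
    (x : EuclideanSpace ℝ (Fin n)) : ℝ :=
  pd i (fun y => H y j k m) x
    - ∑ p, (christoffel g ginv p i j x * H x p k m
        + christoffel g ginv p i k x * H x j p m
        + christoffel g ginv p i m x * H x j k p)

/-- Components `(dH)_{ijkm}` of the exterior derivative of the 3-form `H`. -/
def extDerH (H : EuclideanSpace ℝ (Fin n) → Fin n → Fin n → Fin n → ℝ) (i j k m : Fin n)
    (x : EuclideanSpace ℝ (Fin n)) : ℝ :=
  pd i (fun y => H y j k m) x - pd j (fun y => H y i k m) x
    + pd k (fun y => H y i j m) x - pd m (fun y => H y i j k) x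

/-- `g` is a smooth Riemannian metric (in the fixed global chart) with inverse `ginv`. -/
def IsRiemannianData (g ginv : EuclideanSpace ℝ (Fin n) → Fin n → Fin n → ℝ) : Prop :=
  (∀ x i j, g x i j = g x j i) ∧
  (∀ (x : EuclideanSpace ℝ (Fin n)) (v : Fin n → ℝ), v ≠ 0 →
    0 < ∑ i, ∑ j, g x i j * v i * v j) ∧
  (∀ x i j, (∑ k, g x i k * ginv x k j) = if i = j then (1 : ℝ) else 0) ∧
  (∀ i j, ContDiff ℝ (⊤ : ℕ∞) fun x => g x i j) ∧
  (∀ i j, ContDiff ℝ (⊤ : ℕ∞) fun x => ginv x i j)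

/-- `H` is a smooth (totally antisymmetric) 3-form. -/
def IsThreeForm (H : EuclideanSpace ℝ (Fin n) → Fin n → Fin n → Fin n → ℝ) : Prop :=
  (∀ x i j k, H x i j k = -H x j i k) ∧
  (∀ x i j k, H x i j k = -H x i k j) ∧
  (∀ i j k, ContDiff ℝ (⊤ : ℕ∞) fun x => H x i j k)


lemma pd_add {f h : EuclideanSpace ℝ (Fin n) → ℝ} {x} (i : Fin n)
    (hf : DifferentiableAt ℝ f x) (hh : DifferentiableAt ℝ h x) :
    pd i (fun y => f y + h y) x = pd i f x + pd i h x := by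
  simp [pd, fderiv_fun_add hf hh]

lemma pd_neg {f : EuclideanSpace ℝ (Fin n) → ℝ} {x} (i : Fin n) :
    pd i (fun y => -f y) x = -pd i f x := by
  simp [pd, fderiv_neg]

lemma pd_sub {f h : EuclideanSpace ℝ (Fin n) → ℝ} {x} (i : Fin n)
    (hf : DifferentiableAt ℝ f x) (hh : DifferentiableAt ℝ h x) :
    pd i (fun y => f y - h y) x = pd i f x - pd i h x := by
  simp [pd, fderiv_fun_sub hf hh]

lemma pd_mul {f h : EuclideanSpace ℝ (Fin n) → ℝ} {x} (i : Fin n)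
    (hf : DifferentiableAt ℝ f x) (hh : DifferentiableAt ℝ h x) :
    pd i (fun y => f y * h y) x = pd i f x * h x + f x * pd i h x := by
  simp [pd, fderiv_fun_mul hf hh]; ring

lemma pd_const_mul {f : EuclideanSpace ℝ (Fin n) → ℝ} {x} (i : Fin n) (c : ℝ)
    (hf : DifferentiableAt ℝ f x) :
    pd i (fun y => c * f y) x = c * pd i f x := by
  simp [pd, fderiv_const_mul hf c]

lemma pd_sum {ι : Type*} (s : Finset ι) {f : ι → EuclideanSpace ℝ (Fin n) → ℝ} {x} (i : Fin n)
    (hf : ∀ l ∈ s, DifferentiableAt ℝ (f l) x) :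
    pd i (fun y => ∑ l ∈ s, f l y) x = ∑ l ∈ s, pd i (f l) x := by
  simp [pd, fderiv_fun_sum hf]

lemma contDiff_pd {f : EuclideanSpace ℝ (Fin n) → ℝ} (i : Fin n)
    (hf : ContDiff ℝ (⊤ : ℕ∞) f) : ContDiff ℝ (⊤ : ℕ∞) (fun x => pd i f x) := by
  exact (hf.fderiv_right (m := ((⊤:ℕ∞):WithTop ℕ∞)) (by simp)).clm_apply contDiff_const

lemma pd_comm {f : EuclideanSpace ℝ (Fin n) → ℝ} (i j : Fin n) (x)
    (hf : ContDiff ℝ (⊤ : ℕ∞) f) :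
    pd i (fun y => pd j f y) x = pd j (fun y => pd i f y) x := by
  have hdf : Differentiable ℝ f := hf.differentiable (by simp)
  have hdf' : DifferentiableAt ℝ (fderiv ℝ f) x :=
    ((hf.fderiv_right (m := ((⊤:ℕ∞):WithTop ℕ∞)) (by simp)).differentiable (by simp)).differentiableAt
  have h1 : ∀ (a : Fin n) (v : EuclideanSpace ℝ (Fin n)),
      pd a (fun y => (fderiv ℝ f y) v) x = (fderiv ℝ (fderiv ℝ f) x) (EuclideanSpace.single a 1) v := by
    intro a v
    simp [pd, fderiv_clm_apply hdf' (differentiableAt_const v)]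
  have hsymm := second_derivative_symmetric (f' := fderiv ℝ f)
    (fun y => (hdf y).hasFDerivAt) hdf'.hasFDerivAt
  rw [show (fun y => pd j f y) = (fun y => (fderiv ℝ f y) (EuclideanSpace.single j 1)) from rfl,
      show (fun y => pd i f y) = (fun y => (fderiv ℝ f y) (EuclideanSpace.single i 1)) from rfl,
      h1 i (EuclideanSpace.single j 1), h1 j (EuclideanSpace.single i 1)]
  exact hsymm _ _


section Aux
variable {g ginv : EuclideanSpace ℝ (Fin n) → Fin n → Fin n → ℝ}
variable {H : EuclideanSpace ℝ (Fin n) → Fin n → Fin n → Fin n → ℝ}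

/-- Lowered hat Christoffel symbols. -/
def GhatL (g : EuclideanSpace ℝ (Fin n) → Fin n → Fin n → ℝ)
    (H : EuclideanSpace ℝ (Fin n) → Fin n → Fin n → Fin n → ℝ) (k i j : Fin n)
    (x : EuclideanSpace ℝ (Fin n)) : ℝ :=
  christoffelLow g k i j x + (1 / 2) * H x k i j

lemma smooth_christoffelLow (hg : IsRiemannianData g ginv) (k i j : Fin n) :
    ContDiff ℝ (⊤ : ℕ∞) (fun x => christoffelLow g k i j x) := by
  unfold christoffelLow
  exact contDiff_const.mul (((contDiff_pd i (hg.2.2.2.1 j k)).add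
    (contDiff_pd j (hg.2.2.2.1 i k))).sub (contDiff_pd k (hg.2.2.2.1 i j)))

lemma smooth_GhatL (hg : IsRiemannianData g ginv) (hH : IsThreeForm H) (k i j : Fin n) :
    ContDiff ℝ (⊤ : ℕ∞) (fun x => GhatL g H k i j x) := by
  unfold GhatL
  exact (smooth_christoffelLow hg k i j).add (contDiff_const.mul (hH.2.2 k i j))

lemma smooth_christoffel (hg : IsRiemannianData g ginv) (k i j : Fin n) :
    ContDiff ℝ (⊤ : ℕ∞) (fun x => christoffel g ginv k i j x) := by
  unfold christoffel
  exact ContDiff.sum fun l _ => (hg.2.2.2.2 k l).mul (smooth_christoffelLow hg l i j)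

lemma smooth_christoffelHat (hg : IsRiemannianData g ginv) (hH : IsThreeForm H) (k i j : Fin n) :
    ContDiff ℝ (⊤ : ℕ∞) (fun x => christoffelHat g ginv H k i j x) := by
  unfold christoffelHat
  exact (smooth_christoffel hg k i j).add
    (contDiff_const.mul (ContDiff.sum fun l _ => (hg.2.2.2.2 k l).mul (hH.2.2 l i j)))

lemma diffAt_of_smooth {f : EuclideanSpace ℝ (Fin n) → ℝ} (hf : ContDiff ℝ (⊤ : ℕ∞) f)
    (x : EuclideanSpace ℝ (Fin n)) : DifferentiableAt ℝ f x :=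
  (hf.differentiable (by simp)).differentiableAt


-- H permutation helpers
lemma H12 (hH : IsThreeForm H) (x) (a b c : Fin n) : H x a b c = -H x b a c := hH.1 x a b c
lemma H23 (hH : IsThreeForm H) (x) (a b c : Fin n) : H x a b c = -H x a c b := hH.2.1 x a b c
lemma Hcyc (hH : IsThreeForm H) (x) (a b c : Fin n) : H x a b c = H x c a b := by
  rw [H12 hH x c a b, H23 hH x a c b]; ring

-- inverse metric facts
lemma ginv_g (hg : IsRiemannianData g ginv) (x) (i j : Fin n) :
    (∑ k, ginv x i k * g x k j) = if i = j then (1 : ℝ) else 0 := by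
  classical
  set M : Matrix (Fin n) (Fin n) ℝ := Matrix.of fun a b => g x a b with hM
  set N : Matrix (Fin n) (Fin n) ℝ := Matrix.of fun a b => ginv x a b with hN
  have hMN : M * N = 1 := by
    ext a b
    rw [Matrix.mul_apply, Matrix.one_apply]
    simpa [hM, hN] using hg.2.2.1 x a b
  have hNM : N * M = 1 := mul_eq_one_comm.mp hMN
  have := congrArg (fun P => P i j) hNM
  simpa [Matrix.mul_apply, Matrix.one_apply, hM, hN] using this

lemma ginv_symm (hg : IsRiemannianData g ginv) (x) (i j : Fin n) :
    ginv x i j = ginv x j i := by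
  classical
  set M : Matrix (Fin n) (Fin n) ℝ := Matrix.of fun a b => g x a b with hM
  set N : Matrix (Fin n) (Fin n) ℝ := Matrix.of fun a b => ginv x a b with hN
  have hMN : M * N = 1 := by
    ext a b
    rw [Matrix.mul_apply, Matrix.one_apply]
    simpa [hM, hN] using hg.2.2.1 x a b
  have hNM : N * M = 1 := mul_eq_one_comm.mp hMN
  have hMsymm : M.transpose = M := by
    ext a b; simp [Matrix.transpose_apply, hM]; exact hg.1 x b a
  have hNtM : N.transpose * M = 1 := by
    have : (M * N).transpose = (1 : Matrix (Fin n) (Fin n) ℝ).transpose := by rw [hMN]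
    rw [Matrix.transpose_mul, hMsymm, Matrix.transpose_one] at this
    exact this
  have hNsymm : N.transpose = N := by
    calc N.transpose = N.transpose * (M * N) := by rw [hMN, mul_one]
    _ = (N.transpose * M) * N := by rw [mul_assoc]
    _ = N := by rw [hNtM, one_mul]
  have := congrArg (fun P => P i j) hNsymm
  simpa [Matrix.transpose_apply, hN] using this.symm


lemma hat_eq (x) (k i j : Fin n) :
    christoffelHat g ginv H k i j x = ∑ l, ginv x k l * GhatL g H l i j x := by
  unfold christoffelHat christoffel GhatL
  rw [Finset.mul_sum, ← Finset.sum_add_distrib]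
  exact Finset.sum_congr rfl fun l _ => by ring

lemma contract_hat (hg : IsRiemannianData g ginv) (x) (k i j : Fin n) :
    ∑ p, g x k p * christoffelHat g ginv H p i j x = GhatL g H k i j x := by
  classical
  have : ∀ p, g x k p * christoffelHat g ginv H p i j x
      = ∑ l, g x k p * ginv x p l * GhatL g H l i j x := by
    intro p; rw [hat_eq, Finset.mul_sum]
    exact Finset.sum_congr rfl fun l _ => by ring
  rw [Finset.sum_congr rfl fun p _ => this p, Finset.sum_comm]
  have : ∀ l, ∑ p, g x k p * ginv x p l * GhatL g H l i j x
      = (if k = l then (1:ℝ) else 0) * GhatL g H l i j x := by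
    intro l
    rw [← Finset.sum_mul, hg.2.2.1 x k l]
  rw [Finset.sum_congr rfl fun l _ => this l]
  simp

/-- Metric compatibility of the hat connection, lowered form. -/
lemma pd_g (hg : IsRiemannianData g ginv) (hH : IsThreeForm H) (x) (i k l : Fin n) :
    pd i (fun y => g y k l) x = GhatL g H k i l x + GhatL g H l i k x := by
  have e1 : pd i (fun y => g y l k) x = pd i (fun y => g y k l) x := by
    congr 1; funext y; rw [hg.1]
  have e2 : H x l i k = -H x k i l := by rw [Hcyc hH x l i k, H23 hH x k l i]
  unfold GhatL christoffelLow
  rw [e1, e2]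
  ring

lemma GhatL_sub (hg : IsRiemannianData g ginv) (hH : IsThreeForm H) (x) (p a b : Fin n) :
    GhatL g H p a b x - GhatL g H p b a x = H x p a b := by
  have e1 : pd p (fun y => g y b a) x = pd p (fun y => g y a b) x := by
    congr 1; funext y; rw [hg.1]
  have e2 : H x p b a = -H x p a b := by rw [H23 hH x p b a]
  unfold GhatL christoffelLow
  rw [e1, e2]
  ring


lemma Dfn_symm (hg : IsRiemannianData g ginv) (x) (a b c d : Fin n) :
    ∑ p, GhatL g H p a b x * christoffelHat g ginv H p c d x
      = ∑ p, GhatL g H p c d x * christoffelHat g ginv H p a b x := by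
  have expand : ∀ (a b c d : Fin n),
      ∑ p, GhatL g H p a b x * christoffelHat g ginv H p c d x
        = ∑ p, ∑ l, GhatL g H p a b x * (ginv x p l * GhatL g H l c d x) := by
    intro a b c d
    refine Finset.sum_congr rfl fun p _ => ?_
    rw [hat_eq, Finset.mul_sum]
  rw [expand, expand, Finset.sum_comm]
  refine Finset.sum_congr rfl fun p _ => Finset.sum_congr rfl fun l _ => ?_
  rw [ginv_symm hg x l p]
  ring

lemma sum_g_pd_hat (hg : IsRiemannianData g ginv) (hH : IsThreeForm H) (x)
    (d a b k : Fin n) :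
    ∑ p, g x k p * pd d (christoffelHat g ginv H p a b) x
      = pd d (fun y => GhatL g H k a b y) x
        - ∑ p, (GhatL g H k d p x + GhatL g H p d k x) * christoffelHat g ginv H p a b x := by
  have hfun : (fun y => GhatL g H k a b y)
      = fun y => ∑ p, g y k p * christoffelHat g ginv H p a b y := by
    funext y; rw [contract_hat hg]
  rw [hfun]
  rw [pd_sum Finset.univ d (f := fun p y => g y k p * christoffelHat g ginv H p a b y) (fun p _ => (diffAt_of_smooth (hg.2.2.2.1 k p) x).mul
      (diffAt_of_smooth (smooth_christoffelHat hg hH p a b) x))]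
  have step : ∀ p ∈ Finset.univ, pd d (fun y => g y k p * christoffelHat g ginv H p a b y) x
      = pd d (fun y => g y k p) x * christoffelHat g ginv H p a b x
        + g x k p * pd d (christoffelHat g ginv H p a b) x := fun p _ =>
    pd_mul d (diffAt_of_smooth (hg.2.2.2.1 k p) x)
      (diffAt_of_smooth (smooth_christoffelHat hg hH p a b) x)
  rw [Finset.sum_congr rfl step, Finset.sum_add_distrib]
  have step2 : ∀ p ∈ Finset.univ, pd d (fun y => g y k p) x * christoffelHat g ginv H p a b x
      = (GhatL g H k d p x + GhatL g H p d k x) * christoffelHat g ginv H p a b x := fun p _ => by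
    rw [pd_g hg hH]
  rw [Finset.sum_congr rfl step2]
  ring

/-- Fully lowered formula for the hat curvature. -/
lemma curvHat_formula (hg : IsRiemannianData g ginv) (hH : IsThreeForm H) (x)
    (i j k m : Fin n) :
    curvHat g ginv H i j k m x
      = pd i (fun y => GhatL g H k j m y) x - pd j (fun y => GhatL g H k i m y) x
        - ∑ p, GhatL g H p i k x * christoffelHat g ginv H p j m x
        + ∑ p, GhatL g H p j k x * christoffelHat g ginv H p i m x := by
  unfold curvHat curvHatUp
  simp only [mul_sub, mul_add, Finset.mul_sum]
  rw [Finset.sum_add_distrib, Finset.sum_sub_distrib]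
  rw [sum_g_pd_hat hg hH x i j m k, sum_g_pd_hat hg hH x j i m k]
  have quad : ∀ (a b : Fin n),
      ∑ p, ∑ q, g x k p * (christoffelHat g ginv H p a q x * christoffelHat g ginv H q b m x)
        = ∑ q, GhatL g H k a q x * christoffelHat g ginv H q b m x := by
    intro a b
    rw [Finset.sum_comm]
    refine Finset.sum_congr rfl fun q _ => ?_
    simp only [← mul_assoc]
    rw [← Finset.sum_mul, contract_hat hg]
  simp only [Finset.sum_sub_distrib]
  rw [quad i j, quad j i]
  simp only [add_mul, Finset.sum_add_distrib]
  ring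


/-- Antisymmetry of the hat curvature in its last two indices. -/
lemma curvHat_antisym (hg : IsRiemannianData g ginv) (hH : IsThreeForm H) (x)
    (i j k m : Fin n) :
    curvHat g ginv H i j m k x = -curvHat g ginv H i j k m x := by
  have comb : ∀ a b : Fin n,
      pd a (fun y => GhatL g H k b m y) x + pd a (fun y => GhatL g H m b k y) x
        = pd a (fun y => pd b (fun z => g z k m) y) x := by
    intro a b
    have hfun : (fun y => pd b (fun z => g z k m) y)
        = fun y => GhatL g H k b m y + GhatL g H m b k y := by
      funext y; exact pd_g hg hH y b k m
    rw [hfun, pd_add a (diffAt_of_smooth (smooth_GhatL hg hH k b m) x)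
      (diffAt_of_smooth (smooth_GhatL hg hH m b k) x)]
  have schwarz : pd i (fun y => pd j (fun z => g z k m) y) x
      = pd j (fun y => pd i (fun z => g z k m) y) x := pd_comm i j x (hg.2.2.2.1 k m)
  rw [curvHat_formula hg hH x i j k m, curvHat_formula hg hH x i j m k]
  have d1 := Dfn_symm (H := H) hg x i k j m
  have d2 := Dfn_symm (H := H) hg x i m j k
  linarith [comb i j, comb j i, schwarz, d1, d2]


/-- Cyclic sum of the hat curvature (with `m` in third slot). -/
lemma curvHat_cyc (hg : IsRiemannianData g ginv) (hH : IsThreeForm H) (x)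
    (i j k m : Fin n) :
    curvHat g ginv H i j m k x + curvHat g ginv H j k m i x + curvHat g ginv H k i m j x
      = pd i (fun y => H y m j k) x + pd j (fun y => H y m k i) x + pd k (fun y => H y m i j) x
        - ∑ p, christoffelHat g ginv H p i m x * H x p j k
        - ∑ p, christoffelHat g ginv H p j m x * H x p k i
        - ∑ p, christoffelHat g ginv H p k m x * H x p i j := by
  rw [curvHat_formula hg hH x i j m k, curvHat_formula hg hH x j k m i,
    curvHat_formula hg hH x k i m j]
  have pdpair : ∀ a b c : Fin n,
      pd a (fun y => GhatL g H m b c y) x - pd a (fun y => GhatL g H m c b y) x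
        = pd a (fun y => H y m b c) x := by
    intro a b c
    rw [← pd_sub a (diffAt_of_smooth (smooth_GhatL hg hH m b c) x)
      (diffAt_of_smooth (smooth_GhatL hg hH m c b) x)]
    congr 1; funext y; exact GhatL_sub hg hH y m b c
  have gpair : ∀ a b c : Fin n,
      (∑ p, GhatL g H p c b x * christoffelHat g ginv H p a m x)
        - ∑ p, GhatL g H p b c x * christoffelHat g ginv H p a m x
        = -∑ p, christoffelHat g ginv H p a m x * H x p b c := by
    intro a b c
    rw [← Finset.sum_sub_distrib, ← Finset.sum_neg_distrib]
    refine Finset.sum_congr rfl fun p _ => ?_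
    rw [show H x p b c = GhatL g H p b c x - GhatL g H p c b x from
      (GhatL_sub hg hH x p b c).symm]
    ring
  have e1 := Dfn_symm (H := H) hg x i m j k
  have e2 := Dfn_symm (H := H) hg x i m k j
  have e3 := Dfn_symm (H := H) hg x j m k i
  have e4 := Dfn_symm (H := H) hg x j m i k
  have e5 := Dfn_symm (H := H) hg x k m i j
  have e6 := Dfn_symm (H := H) hg x k m j i
  linarith [pdpair i j k, pdpair j k i, pdpair k i j, gpair i j k, gpair j k i, gpair k i j,
    e1, e2, e3, e4, e5, e6]


lemma christoffelLow_symm (hg : IsRiemannianData g ginv) (x) (l a b : Fin n) :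
    christoffelLow g l a b x = christoffelLow g l b a x := by
  unfold christoffelLow
  rw [show pd l (fun y => g y a b) x = pd l (fun y => g y b a) x from by
    congr 1; funext y; rw [hg.1]]
  ring

lemma christoffel_symm (hg : IsRiemannianData g ginv) (x) (p a b : Fin n) :
    christoffel g ginv p a b x = christoffel g ginv p b a x := by
  unfold christoffel
  exact Finset.sum_congr rfl fun l _ => by rw [christoffelLow_symm hg]

lemma Csum_symm (hg : IsRiemannianData g ginv) (x) (a b c d : Fin n) :
    ∑ p, christoffel g ginv p a b x * H x p c d
      = ∑ p, christoffel g ginv p b a x * H x p c d :=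
  Finset.sum_congr rfl fun p _ => by rw [christoffel_symm hg]

lemma Csum_skew (hH : IsThreeForm H) (x) (a b c d : Fin n) :
    ∑ p, christoffel g ginv p a b x * H x p c d
      = -∑ p, christoffel g ginv p a b x * H x p d c := by
  rw [← Finset.sum_neg_distrib]
  exact Finset.sum_congr rfl fun p _ => by rw [H23 hH x p c d]; ring

lemma Tsum_swap (hg : IsRiemannianData g ginv) (x) (a b c d : Fin n) :
    ∑ p, ∑ l, ginv x p l * H x l a b * H x p c d
      = ∑ p, ∑ l, ginv x p l * H x l c d * H x p a b := by
  rw [Finset.sum_comm]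
  refine Finset.sum_congr rfl fun p _ => Finset.sum_congr rfl fun l _ => ?_
  rw [ginv_symm hg x l p]
  ring

lemma Tsum_skew1 (hH : IsThreeForm H) (x) (a b c d : Fin n) :
    ∑ p, ∑ l, ginv x p l * H x l a b * H x p c d
      = -∑ p, ∑ l, ginv x p l * H x l b a * H x p c d := by
  rw [← Finset.sum_neg_distrib]
  refine Finset.sum_congr rfl fun p _ => ?_
  rw [← Finset.sum_neg_distrib]
  exact Finset.sum_congr rfl fun l _ => by rw [H23 hH x l a b]; ring

lemma Tsum_skew2 (hH : IsThreeForm H) (x) (a b c d : Fin n) :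
    ∑ p, ∑ l, ginv x p l * H x l a b * H x p c d
      = -∑ p, ∑ l, ginv x p l * H x l a b * H x p d c := by
  rw [← Finset.sum_neg_distrib]
  refine Finset.sum_congr rfl fun p _ => ?_
  rw [← Finset.sum_neg_distrib]
  exact Finset.sum_congr rfl fun l _ => by rw [H23 hH x p c d]; ring

lemma S_split (x) (a b c d : Fin n) :
    ∑ p, christoffelHat g ginv H p a b x * H x p c d
      = (∑ p, christoffel g ginv p a b x * H x p c d)
        + (1 / 2) * ∑ p, ∑ l, ginv x p l * H x l a b * H x p c d := by
  rw [Finset.mul_sum, ← Finset.sum_add_distrib]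
  refine Finset.sum_congr rfl fun p _ => ?_
  unfold christoffelHat
  rw [add_mul, mul_assoc, Finset.sum_mul]

end Aux

/-- Second Bianchi-type identity of the metric connection `∇̂` with torsion `H`:
`3 R̂_{[ijk]m} = -(3/2) ∇̂_{[i} H_{jk]m} - ½ ∇̂_m H_{ijk} - ½ (dH)_{ijkm}`.
Since `R̂_{ijkm}` is antisymmetric in its first two indices and `H` is totally skew, both
antisymmetrisations are rendered by the corresponding cyclic sums. -/
theorem bianchi_second
    (g ginv : EuclideanSpace ℝ (Fin n) → Fin n → Fin n → ℝ)
    (H : EuclideanSpace ℝ (Fin n) → Fin n → Fin n → Fin n → ℝ)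
    (hg : IsRiemannianData g ginv) (hH : IsThreeForm H) :
    ∀ (x : EuclideanSpace ℝ (Fin n)) (i j k m : Fin n),
      curvHat g ginv H i j k m x + curvHat g ginv H j k i m x + curvHat g ginv H k i j m x
        = -(1 / 2) * (nablaHatH g ginv H i j k m x + nablaHatH g ginv H j k i m x
              + nablaHatH g ginv H k i j m x)
          - (1 / 2) * nablaHatH g ginv H m i j k x
          - (1 / 2) * extDerH H i j k m x := by
  intro x i j k m
  have Hcyc' : ∀ (y : EuclideanSpace ℝ (Fin n)) (a b c : Fin n), H y a b c = H y b c a :=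
    fun y a b c => (Hcyc hH y a b c).trans (Hcyc hH y c a b)
  have A1 := curvHat_antisym hg hH x i j k m
  have A2 := curvHat_antisym hg hH x j k i m
  have A3 := curvHat_antisym hg hH x k i j m
  have F0 := curvHat_cyc hg hH x i j k m
  have pdm1 : pd i (fun y => H y m j k) x = pd i (fun y => H y j k m) x := by
    congr 1; funext y; rw [Hcyc hH y j k m]
  have pdm2 : pd j (fun y => H y m k i) x = pd j (fun y => H y k i m) x := by
    congr 1; funext y; rw [Hcyc hH y k i m]
  have pdm3 : pd k (fun y => H y m i j) x = pd k (fun y => H y i j m) x := by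
    congr 1; funext y; rw [Hcyc hH y i j m]
  have pdneg : pd j (fun y => H y i k m) x = -pd j (fun y => H y k i m) x := by
    rw [show (fun y => H y i k m) = fun y => -H y k i m from funext fun y => H12 hH y i k m,
      pd_neg]
  have P1 : ∑ p, christoffelHat g ginv H p i k x * H x j p m
      = ∑ p, christoffelHat g ginv H p i k x * H x p m j :=
    Finset.sum_congr rfl fun p _ => by rw [Hcyc' x j p m]
  have P2 : ∑ p, christoffelHat g ginv H p i m x * H x j k p
      = ∑ p, christoffelHat g ginv H p i m x * H x p j k :=
    Finset.sum_congr rfl fun p _ => by rw [Hcyc hH x j k p]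
  have P3 : ∑ p, christoffelHat g ginv H p j i x * H x k p m
      = ∑ p, christoffelHat g ginv H p j i x * H x p m k :=
    Finset.sum_congr rfl fun p _ => by rw [Hcyc' x k p m]
  have P4 : ∑ p, christoffelHat g ginv H p j m x * H x k i p
      = ∑ p, christoffelHat g ginv H p j m x * H x p k i :=
    Finset.sum_congr rfl fun p _ => by rw [Hcyc hH x k i p]
  have P5 : ∑ p, christoffelHat g ginv H p k j x * H x i p m
      = ∑ p, christoffelHat g ginv H p k j x * H x p m i :=
    Finset.sum_congr rfl fun p _ => by rw [Hcyc' x i p m]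
  have P6 : ∑ p, christoffelHat g ginv H p k m x * H x i j p
      = ∑ p, christoffelHat g ginv H p k m x * H x p i j :=
    Finset.sum_congr rfl fun p _ => by rw [Hcyc hH x i j p]
  have P7 : ∑ p, christoffelHat g ginv H p m j x * H x i p k
      = ∑ p, christoffelHat g ginv H p m j x * H x p k i :=
    Finset.sum_congr rfl fun p _ => by rw [Hcyc' x i p k]
  have P8 : ∑ p, christoffelHat g ginv H p m k x * H x i j p
      = ∑ p, christoffelHat g ginv H p m k x * H x p i j :=
    Finset.sum_congr rfl fun p _ => by rw [Hcyc hH x i j p]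
  have s1 := S_split (g := g) (ginv := ginv) (H := H) x i j k m
  have s2 := S_split (g := g) (ginv := ginv) (H := H) x i k m j
  have s3 := S_split (g := g) (ginv := ginv) (H := H) x i m j k
  have s4 := S_split (g := g) (ginv := ginv) (H := H) x j k i m
  have s5 := S_split (g := g) (ginv := ginv) (H := H) x j i m k
  have s6 := S_split (g := g) (ginv := ginv) (H := H) x j m k i
  have s7 := S_split (g := g) (ginv := ginv) (H := H) x k i j m
  have s8 := S_split (g := g) (ginv := ginv) (H := H) x k j m i
  have s9 := S_split (g := g) (ginv := ginv) (H := H) x k m i j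
  have s10 := S_split (g := g) (ginv := ginv) (H := H) x m i j k
  have s11 := S_split (g := g) (ginv := ginv) (H := H) x m j k i
  have s12 := S_split (g := g) (ginv := ginv) (H := H) x m k i j
  have c1 := Csum_symm (H := H) hg x m i j k
  have c2 := Csum_symm (H := H) hg x m j k i
  have c3 := Csum_symm (H := H) hg x m k i j
  have c4 := Csum_symm (H := H) hg x j i m k
  have c5 := Csum_skew (g := g) (ginv := ginv) hH x i j m k
  have c6 := Csum_symm (H := H) hg x k i j m
  have c7 := Csum_skew (g := g) (ginv := ginv) hH x i k j m
  have c8 := Csum_symm (H := H) hg x k j m i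
  have c9 := Csum_skew (g := g) (ginv := ginv) hH x j k m i
  have t1 := Tsum_swap (H := H) hg x i j k m
  have t2 := Tsum_swap (H := H) hg x i k m j
  have t2b := Tsum_skew1 (ginv := ginv) hH x m j i k
  have t2c := Tsum_skew2 (ginv := ginv) hH x j m i k
  have t3 := Tsum_swap (H := H) hg x j k i m
  have t4a := Tsum_skew1 (ginv := ginv) hH x j i m k
  have t4b := Tsum_skew2 (ginv := ginv) hH x i j m k
  have t5a := Tsum_skew1 (ginv := ginv) hH x k i j m
  have t5b := Tsum_skew2 (ginv := ginv) hH x i k j m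
  have t6a := Tsum_skew1 (ginv := ginv) hH x k j m i
  have t6b := Tsum_skew2 (ginv := ginv) hH x j k m i
  have t7 := Tsum_skew1 (ginv := ginv) hH x m i j k
  have t8 := Tsum_skew1 (ginv := ginv) hH x m j k i
  have t9 := Tsum_skew1 (ginv := ginv) hH x m k i j
  simp only [nablaHatH, extDerH, Finset.sum_add_distrib] at *
  linarith [A1, A2, A3, F0, pdm1, pdm2, pdm3, pdneg, P1, P2, P3, P4, P5, P6, P7, P8,
    s1, s2, s3, s4, s5, s6, s7, s8, s9, s10, s11, s12,
    c1, c2, c3, c4, c5, c6, c7, c8, c9,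
    t1, t2, t2b, t2c, t3, t4a, t4b, t5a, t5b, t6a, t6b, t7, t8, t9]
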